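/- For every full-rank lattice Λ ⊂ ℝⁿ and every σ > 0, the L∞ flatness factor satisfies the strict lower bound ε_Λ(σ) > V(Λ)·(2πσ²)^{−n/2} − 1 = (γ_Λ(σ)/(2π))^{n/2} − 1, where γ_Λ(σ) = V(Λ)^{2/n}/σ². In particular, ε_Λ(σ) cannot vanish (as n → ∞ along any sequence of lattices) when the volume-to-noise ratio γ_Λ(σ) is a fixed constant greater than 2π. -/

import Mathlib

open MeasureTheory Filter

noncomputable section

/-- The centered Gaussian density `f_σ` on `ℝⁿ`. -/
def gaussF (n : ℕ) (σ : ℝ) (x : EuclideanSpace ℝ (Fin n)) : ℝ :=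
  (2 * Real.pi * σ ^ 2) ^ (-(n : ℝ) / 2) * Real.exp (-‖x‖ ^ 2 / (2 * σ ^ 2))

/-- The `Λ`-periodic Gaussian density `f_{σ,Λ}(x) = Σ_{λ∈Λ} f_σ(x+λ)`. -/
def latF (n : ℕ) (σ : ℝ) (L : Set (EuclideanSpace ℝ (Fin n)))
    (x : EuclideanSpace ℝ (Fin n)) : ℝ :=
  ∑' l : L, gaussF n σ (x + (l : EuclideanSpace ℝ (Fin n)))

/-- `L` is the full-rank lattice generated by the invertible matrix `B`
(so its covolume is `|B.det|`). -/
def IsLattice (n : ℕ) (L : Set (EuclideanSpace ℝ (Fin n)))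
    (B : Matrix (Fin n) (Fin n) ℝ) : Prop :=
  IsUnit B.det ∧
    L = {x : EuclideanSpace ℝ (Fin n) |
          ∃ z : Fin n → ℤ, ∀ i, x i = B.mulVec (fun j => (z j : ℝ)) i}

/-- `R` is a fundamental region of the lattice `L`: measurable, with pairwise
disjoint translates `R + λ` covering `ℝⁿ`. -/
def IsFundamental (n : ℕ) (L R : Set (EuclideanSpace ℝ (Fin n))) : Prop :=
  MeasurableSet R ∧
    (L.Pairwise fun l₁ l₂ => Disjoint ((· + l₁) '' R) ((· + l₂) '' R)) ∧
    (⋃ l ∈ L, (· + l) '' R) = Set.univ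

lemma aux_sum_int (a : ℝ) (ha : 0 < a) :
    Summable fun k : ℤ => Real.exp (-(a * (k : ℝ) ^ 2)) := by
  have hgeo : Summable fun m : ℕ => Real.exp (-a) ^ m :=
    summable_geometric_of_lt_one (Real.exp_pos _).le
      (Real.exp_lt_one_iff.mpr (neg_lt_zero.mpr ha))
  have key : ∀ m : ℕ, Real.exp (-(a * (m : ℝ) ^ 2)) ≤ Real.exp (-a) ^ m := by
    intro m
    rw [← Real.exp_nat_mul]
    apply Real.exp_le_exp.mpr
    have : (m : ℝ) ≤ (m : ℝ) ^ 2 := by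
      exact_mod_cast Nat.cast_le.mpr (Nat.le_self_pow two_ne_zero m)
    nlinarith
  apply Summable.of_nat_of_neg
  · exact hgeo.of_nonneg_of_le (fun m => (Real.exp_pos _).le) key
  · refine hgeo.of_nonneg_of_le (fun m => (Real.exp_pos _).le) (fun m => ?_)
    have h : ((-(m : ℤ) : ℤ) : ℝ) ^ 2 = (m : ℝ) ^ 2 := by push_cast; ring
    rw [h]; exact key m

lemma aux_sum_pi (n : ℕ) (g : ℤ → ℝ) (hg0 : ∀ k, 0 ≤ g k) (hg : Summable g) :
    Summable fun z : Fin n → ℤ => ∏ i, g (z i) := by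
  induction n with
  | zero =>
      have : (fun z : Fin 0 → ℤ => ∏ i, g (z i)) = fun _ => 1 := by
        funext z; simp
      rw [this]
      exact summable_of_finite_support (Set.toFinite _)
  | succ m ih =>
      have h2 : Summable fun p : ℤ × (Fin m → ℤ) => g p.1 * ∏ i, g (p.2 i) := by
        apply Summable.mul_of_nonneg hg ih
        · exact fun k => hg0 k
        · exact fun z => Finset.prod_nonneg fun i _ => hg0 _
      have h3 := (Equiv.summable_iff (Fin.consEquiv fun _ => ℤ).symm).mpr h2
      refine h3.congr fun z => ?_
      simp [Fin.consEquiv, Fin.prod_univ_succ, Fin.tail]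

lemma aux_master (n : ℕ) (a : ℝ) (ha : 0 < a) :
    Summable fun z : Fin n → ℤ => Real.exp (-(a * ∑ i, ((z i : ℝ)) ^ 2)) := by
  have h := aux_sum_pi n (fun k => Real.exp (-(a * (k : ℝ) ^ 2)))
    (fun k => (Real.exp_pos _).le) (aux_sum_int a ha)
  refine h.congr fun z => ?_
  rw [← Real.exp_sum]
  congr 1
  rw [Finset.mul_sum, ← Finset.sum_neg_distrib]

lemma aux_calc (sq c S X Y : ℝ) (hsq : 0 < sq) (hc : 0 < c)
    (hS : S ≤ c ^ 2 * (2 * X + 2 * Y)) :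
    (1 / (4 * sq * c ^ 2)) * S ≤ X / (2 * sq) + Y / (2 * sq) := by
  rw [← add_div, le_div_iff₀ (by positivity)]
  have h1 : (1 / (4 * sq * c ^ 2)) * S ≤ (1 / (4 * sq * c ^ 2)) * (c ^ 2 * (2 * X + 2 * Y)) :=
    mul_le_mul_of_nonneg_left hS (by positivity)
  have h2 : (1 / (4 * sq * c ^ 2)) * (c ^ 2 * (2 * X + 2 * Y)) * (2 * sq) = X + Y := by
    field_simp
    ring
  nlinarith [h1, hsq, sq_nonneg c]

set_option maxHeartbeats 1000000 in
/-- strict lower bound on the L∞ flatness factor in terms of the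
volume-to-noise ratio. -/
theorem stmt_7 (n : ℕ) (hn : 1 ≤ n) (L : Set (EuclideanSpace ℝ (Fin n)))
    (B : Matrix (Fin n) (Fin n) ℝ) (hL : IsLattice n L B)
    (σ : ℝ) (hσ : 0 < σ) :
    (⨆ x : EuclideanSpace ℝ (Fin n), abs (|B.det| * latF n σ L x - 1)) >
        |B.det| * (2 * Real.pi * σ ^ 2) ^ (-(n : ℝ) / 2) - 1 ∧
      |B.det| * (2 * Real.pi * σ ^ 2) ^ (-(n : ℝ) / 2) - 1 =
        ((|B.det| ^ (2 / (n : ℝ)) / σ ^ 2) / (2 * Real.pi)) ^ ((n : ℝ) / 2) - 1 := by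
  obtain ⟨hu, hLdef⟩ := hL
  set V : ℝ := |B.det| with hVdef
  have hV : 0 < V := abs_pos.mpr hu.ne_zero
  have hσ2 : (0 : ℝ) < σ ^ 2 := by positivity
  have h2πσ : (0 : ℝ) < 2 * Real.pi * σ ^ 2 := by positivity
  set g : ℝ := (2 * Real.pi * σ ^ 2) ^ (-(n : ℝ) / 2) with hgdef
  have hg : 0 < g := Real.rpow_pos_of_pos h2πσ _
  -- the lattice map
  set φ : (Fin n → ℤ) → EuclideanSpace ℝ (Fin n) :=
    fun z => (WithLp.equiv 2 (Fin n → ℝ)).symm (B.mulVec fun j => (z j : ℝ)) with hφdef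
  have hBinv : B⁻¹ * B = 1 := Matrix.nonsing_inv_mul B hu
  have hBinv' : B * B⁻¹ = 1 := Matrix.mul_nonsing_inv B hu
  have hφinj : Function.Injective φ := by
    intro z z' h
    have h2 : B.mulVec (fun j => (z j : ℝ)) = B.mulVec (fun j => (z' j : ℝ)) :=
      (WithLp.equiv 2 (Fin n → ℝ)).symm.injective h
    have h3 := congrArg (fun v => (B⁻¹).mulVec v) h2
    simp only [Matrix.mulVec_mulVec, hBinv, Matrix.one_mulVec] at h3
    funext j
    exact_mod_cast congrFun h3 j
  have hLr : L = Set.range φ := by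
    rw [hLdef]
    ext x
    simp only [Set.mem_setOf_eq, Set.mem_range]
    constructor
    · rintro ⟨z, hz⟩
      exact ⟨z, by ext i; exact (hz i).symm⟩
    · rintro ⟨z, rfl⟩
      exact ⟨z, fun i => rfl⟩
  have hφadd : ∀ w z, φ (w + z) = φ w + φ z := by
    intro w z
    have hc : (fun j => ((w + z) j : ℝ)) =
        (fun j => (w j : ℝ)) + (fun j => (z j : ℝ)) := by
      funext j; push_cast; simp
    simp only [hφdef, hc, Matrix.mulVec_add]
    rfl
  have hφzero : φ 0 = 0 := by
    have hc : (fun j => ((0 : Fin n → ℤ) j : ℝ)) = (0 : Fin n → ℝ) := by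
      funext j; simp
    simp only [hφdef, hc, Matrix.mulVec_zero]
    rfl
  have hlat : ∀ x, latF n σ L x = ∑' z : Fin n → ℤ, gaussF n σ (x + φ z) := by
    intro x
    rw [latF]
    exact (Equiv.tsum_eq ((Equiv.ofInjective φ hφinj).trans (Equiv.setCongr hLr.symm))
      (fun l : L => gaussF n σ (x + (l : EuclideanSpace ℝ (Fin n))))).symm
  -- continuous linear maps
  set Tc : EuclideanSpace ℝ (Fin n) →L[ℝ] EuclideanSpace ℝ (Fin n) :=
    LinearMap.toContinuousLinearMap (Matrix.toEuclideanLin B) with hTcdef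
  set Ac : EuclideanSpace ℝ (Fin n) →L[ℝ] EuclideanSpace ℝ (Fin n) :=
    LinearMap.toContinuousLinearMap (Matrix.toEuclideanLin B⁻¹) with hAcdef
  have hT : ∀ y : EuclideanSpace ℝ (Fin n), Tc y =
      (WithLp.equiv 2 (Fin n → ℝ)).symm (B.mulVec (WithLp.equiv 2 (Fin n → ℝ) y)) :=
    fun y => rfl
  have hA : ∀ y : EuclideanSpace ℝ (Fin n), Ac y =
      (WithLp.equiv 2 (Fin n → ℝ)).symm ((B⁻¹).mulVec (WithLp.equiv 2 (Fin n → ℝ) y)) :=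
    fun y => rfl
  have hATy : ∀ y : EuclideanSpace ℝ (Fin n), Ac (Tc y) = y := by
    intro y
    rw [hT, hA]
    simp [Matrix.mulVec_mulVec, hBinv, Matrix.one_mulVec]
  have hTAy : ∀ y : EuclideanSpace ℝ (Fin n), Tc (Ac y) = y := by
    intro y
    rw [hT, hA]
    simp [Matrix.mulVec_mulVec, hBinv', Matrix.one_mulVec]
  have hTφ : ∀ z, φ z = Tc ((WithLp.equiv 2 (Fin n → ℝ)).symm (fun j => ((z j : ℤ) : ℝ))) := by
    intro z
    rw [hT]
    simp [hφdef]
  set c : ℝ := ‖Ac‖ + 1 with hcdef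
  have hc : 0 < c := by
    rw [hcdef]
    have := norm_nonneg Ac
    linarith
  have hlow : ∀ y : EuclideanSpace ℝ (Fin n), ‖y‖ ≤ c * ‖Tc y‖ := by
    intro y
    calc ‖y‖ = ‖Ac (Tc y)‖ := by rw [hATy]
      _ ≤ ‖Ac‖ * ‖Tc y‖ := Ac.le_opNorm _
      _ ≤ c * ‖Tc y‖ := by
          apply mul_le_mul_of_nonneg_right _ (norm_nonneg _)
          rw [hcdef]
          linarith
  have hnsq : ∀ v : EuclideanSpace ℝ (Fin n), ‖v‖ ^ 2 = ∑ i, (v i) ^ 2 := by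
    intro v
    rw [EuclideanSpace.norm_eq, Real.sq_sqrt (by positivity)]
    simp [Real.norm_eq_abs, sq_abs]
  have hkey : ∀ z : Fin n → ℤ, (∑ i, ((z i : ℝ)) ^ 2) ≤ c ^ 2 * ‖φ z‖ ^ 2 := by
    intro z
    have h1 : ‖(WithLp.equiv 2 (Fin n → ℝ)).symm (fun j => ((z j : ℤ) : ℝ))‖ ≤ c * ‖φ z‖ := by
      rw [hTφ z]
      exact hlow _
    have h2 := pow_le_pow_left₀ (norm_nonneg _) h1 2
    rw [mul_pow] at h2
    calc (∑ i, ((z i : ℝ)) ^ 2)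
        = ‖(WithLp.equiv 2 (Fin n → ℝ)).symm (fun j => ((z j : ℤ) : ℝ))‖ ^ 2 := by
          rw [hnsq]; rfl
      _ ≤ c ^ 2 * ‖φ z‖ ^ 2 := h2
  set a : ℝ := 1 / (4 * σ ^ 2 * c ^ 2) with hadef
  have ha : 0 < a := by positivity
  -- pointwise bound
  have hbound : ∀ (x : EuclideanSpace ℝ (Fin n)) (z : Fin n → ℤ), gaussF n σ (x + φ z) ≤
      (g * Real.exp (‖x‖ ^ 2 / (2 * σ ^ 2))) * Real.exp (-(a * ∑ i, ((z i : ℝ)) ^ 2)) := by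
    intro x z
    rw [gaussF, ← hgdef, mul_assoc, ← Real.exp_add]
    apply mul_le_mul_of_nonneg_left _ hg.le
    apply Real.exp_le_exp.mpr
    have htri : ‖φ z‖ ^ 2 ≤ 2 * ‖x + φ z‖ ^ 2 + 2 * ‖x‖ ^ 2 := by
      have h2 : ‖φ z‖ ≤ ‖x + φ z‖ + ‖x‖ :=
        (congrArg norm (add_sub_cancel_left x (φ z))).symm.le.trans (norm_sub_le _ _)
      nlinarith [norm_nonneg (φ z), norm_nonneg (x + φ z), norm_nonneg x,
        sq_nonneg (‖x + φ z‖ - ‖x‖), sq_nonneg (‖x + φ z‖ + ‖x‖)]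
    have haS : a * (∑ i, ((z i : ℝ)) ^ 2) ≤
        ‖x + φ z‖ ^ 2 / (2 * σ ^ 2) + ‖x‖ ^ 2 / (2 * σ ^ 2) := by
      rw [hadef]
      exact aux_calc (σ ^ 2) c _ _ _ hσ2 hc
        ((hkey z).trans (by nlinarith [sq_nonneg c, norm_nonneg x, sq_nonneg ‖x‖]))
    rw [neg_div]
    linarith
  have hmaster := aux_master n a ha
  have hgausspos : ∀ y : EuclideanSpace ℝ (Fin n), 0 < gaussF n σ y :=
    fun y => mul_pos hg (Real.exp_pos _)
  have hsum : ∀ x, Summable fun z : Fin n → ℤ => gaussF n σ (x + φ z) := by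
    intro x
    exact Summable.of_nonneg_of_le (fun z => (hgausspos _).le) (hbound x)
      (hmaster.mul_left _)
  -- periodicity
  have hper : ∀ (x : EuclideanSpace ℝ (Fin n)) (w : Fin n → ℤ),
      (∑' z : Fin n → ℤ, gaussF n σ (x + φ z)) =
      ∑' z : Fin n → ℤ, gaussF n σ ((x + φ w) + φ z) := by
    intro x w
    have h := Equiv.tsum_eq (Equiv.addLeft w) (fun z => gaussF n σ (x + φ z))
    rw [← h]
    refine tsum_congr fun z => ?_
    have : x + φ (Equiv.addLeft w z) = (x + φ w) + φ z := by
      simp only [Equiv.coe_addLeft, hφadd]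
      abel
    rw [this]
  -- covering
  set M : ℝ := ‖Tc‖ * Real.sqrt n with hMdef
  have hM0 : 0 ≤ M := mul_nonneg (norm_nonneg _) (Real.sqrt_nonneg _)
  have hcover : ∀ x : EuclideanSpace ℝ (Fin n), ∃ w : Fin n → ℤ, ‖x + φ w‖ ≤ M := by
    intro x
    refine ⟨fun i => -round ((Ac x) i), ?_⟩
    set t : EuclideanSpace ℝ (Fin n) := Ac x with htdef
    set u : EuclideanSpace ℝ (Fin n) :=
      (WithLp.equiv 2 (Fin n → ℝ)).symm (fun j => ((-round (t j) : ℤ) : ℝ)) with hudef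
    have hx : x + φ (fun i => -round (t i)) = Tc (t + u) := by
      have h1 : x = Tc t := (hTAy x).symm
      have h2 : φ (fun i => -round (t i)) = Tc u := hTφ _
      rw [map_add, ← h1, ← h2]
    rw [hx]
    calc ‖Tc (t + u)‖ ≤ ‖Tc‖ * ‖t + u‖ := Tc.le_opNorm _
      _ ≤ ‖Tc‖ * Real.sqrt n := by
          apply mul_le_mul_of_nonneg_left _ (norm_nonneg _)
          have hsq : ‖t + u‖ ^ 2 ≤ (n : ℝ) := by
            rw [hnsq]
            have hterm : ∀ i : Fin n, ((t + u) i) ^ 2 ≤ 1 := by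
              intro i
              have hco : (t + u) i = t i - (round (t i) : ℝ) := by
                have hui : u i = -(round (t i) : ℝ) := by
                  show ((-round (t i) : ℤ) : ℝ) = _
                  push_cast
                  ring
                rw [PiLp.add_apply, hui]
                ring
              rw [hco]
              have := abs_sub_round (t i)
              have habs : |t i - (round (t i) : ℝ)| ≤ 1 := by linarith
              nlinarith [abs_nonneg (t i - (round (t i) : ℝ)), sq_abs (t i - (round (t i) : ℝ))]
            calc (∑ i, ((t + u) i) ^ 2) ≤ ∑ _i : Fin n, (1 : ℝ) :=
                  Finset.sum_le_sum fun i _ => hterm i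
              _ = (n : ℝ) := by simp
          have h0 : (0:ℝ) ≤ ‖t + u‖ := norm_nonneg _
          nlinarith [Real.sq_sqrt (by positivity : (0:ℝ) ≤ (n:ℝ)),
            Real.sqrt_nonneg (n:ℝ)]
  -- uniform bound
  set C0 : ℝ := ∑' z : Fin n → ℤ, Real.exp (-(a * ∑ i, ((z i : ℝ)) ^ 2)) with hC0def
  set K : ℝ := g * Real.exp (M ^ 2 / (2 * σ ^ 2)) with hKdef
  have hK0 : 0 ≤ K := mul_nonneg hg.le (Real.exp_pos _).le
  have hC00 : 0 ≤ C0 := tsum_nonneg fun z => (Real.exp_pos _).le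
  have hunif : ∀ x, latF n σ L x ≤ K * C0 := by
    intro x
    obtain ⟨w, hw⟩ := hcover x
    rw [hlat x, hper x w]
    have hb2 : ∀ z : Fin n → ℤ, gaussF n σ ((x + φ w) + φ z) ≤
        K * Real.exp (-(a * ∑ i, ((z i : ℝ)) ^ 2)) := by
      intro z
      refine (hbound (x + φ w) z).trans ?_
      apply mul_le_mul_of_nonneg_right _ (Real.exp_pos _).le
      rw [hKdef]
      apply mul_le_mul_of_nonneg_left _ hg.le
      apply Real.exp_le_exp.mpr
      have hsq := pow_le_pow_left₀ (norm_nonneg (x + φ w)) hw 2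
      have h2σ : (0:ℝ) < 2 * σ ^ 2 := by positivity
      exact (div_le_div_iff_of_pos_right h2σ).mpr hsq
    calc (∑' z : Fin n → ℤ, gaussF n σ ((x + φ w) + φ z))
        ≤ ∑' z : Fin n → ℤ, K * Real.exp (-(a * ∑ i, ((z i : ℝ)) ^ 2)) :=
          Summable.tsum_le_tsum hb2 (hsum _) (hmaster.mul_left K)
      _ = K * C0 := tsum_mul_left
  have hlatnn : ∀ x, 0 ≤ latF n σ L x := by
    intro x
    rw [hlat x]
    exact tsum_nonneg fun z => (hgausspos _).le
  -- bounded above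
  have hbdd : BddAbove (Set.range fun x : EuclideanSpace ℝ (Fin n) =>
      |V * latF n σ L x - 1|) := by
    refine ⟨V * (K * C0) + 1, ?_⟩
    rintro y ⟨x, rfl⟩
    have h1 : 0 ≤ V * latF n σ L x := mul_nonneg hV.le (hlatnn x)
    have h2 : V * latF n σ L x ≤ V * (K * C0) :=
      mul_le_mul_of_nonneg_left (hunif x) hV.le
    rw [abs_le]
    constructor <;> nlinarith
  -- strict lower bound at 0
  have hG0 : g < latF n σ L 0 := by
    rw [hlat 0]
    set z1 : Fin n → ℤ := fun _ => 1 with hz1def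
    have hne : (0 : Fin n → ℤ) ≠ z1 := by
      intro h
      have := congrFun h ⟨0, hn⟩
      simp [hz1def] at this
    have hfin : ∑ z ∈ ({0, z1} : Finset (Fin n → ℤ)), gaussF n σ (0 + φ z) ≤
        ∑' z : Fin n → ℤ, gaussF n σ (0 + φ z) :=
      Summable.sum_le_tsum _ (fun z _ => (hgausspos _).le) (hsum 0)
    rw [Finset.sum_pair hne] at hfin
    have h0 : gaussF n σ (0 + φ 0) = g := by
      rw [hφzero]
      simp [gaussF, ← hgdef]
    rw [h0] at hfin
    have := hgausspos (0 + φ z1)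
    linarith
  refine ⟨?_, ?_⟩
  · have hle : |V * latF n σ L 0 - 1| ≤
        ⨆ x : EuclideanSpace ℝ (Fin n), |V * latF n σ L x - 1| :=
      le_ciSup hbdd 0
    have hstep : V * g - 1 < V * latF n σ L 0 - 1 := by
      have := mul_lt_mul_of_pos_left hG0 hV
      linarith
    calc V * g - 1 < V * latF n σ L 0 - 1 := hstep
      _ ≤ |V * latF n σ L 0 - 1| := le_abs_self _
      _ ≤ _ := hle
  · -- algebra
    have hn0 : (n : ℝ) ≠ 0 := Nat.cast_ne_zero.mpr (by omega)
    have h2π : (0 : ℝ) < 2 * Real.pi := by positivity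
    have hVexp : (V ^ (2 / (n : ℝ))) ^ ((n : ℝ) / 2) = V := by
      rw [← Real.rpow_mul hV.le]
      have hone : 2 / (n : ℝ) * ((n : ℝ) / 2) = 1 := by field_simp
      rw [hone, Real.rpow_one]
    have e1 : ((V ^ (2 / (n : ℝ)) / σ ^ 2) / (2 * Real.pi)) ^ ((n : ℝ) / 2)
        = (V ^ (2 / (n : ℝ))) ^ ((n : ℝ) / 2) /
          ((σ ^ 2) ^ ((n : ℝ) / 2) * (2 * Real.pi) ^ ((n : ℝ) / 2)) := by
      rw [Real.div_rpow (by positivity) h2π.le,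
        Real.div_rpow (Real.rpow_nonneg hV.le _) hσ2.le, div_div]
    have e2 : (2 * Real.pi * σ ^ 2) ^ (-(n : ℝ) / 2)
        = ((2 * Real.pi) ^ ((n : ℝ) / 2) * (σ ^ 2) ^ ((n : ℝ) / 2))⁻¹ := by
      rw [neg_div, Real.rpow_neg h2πσ.le, Real.mul_rpow h2π.le hσ2.le]
    rw [hgdef, e2, e1, hVexp]
    have hA : (2 * Real.pi) ^ ((n : ℝ) / 2) ≠ 0 := (Real.rpow_pos_of_pos h2π _).ne'
    have hB : (σ ^ 2) ^ ((n : ℝ) / 2) ≠ 0 := (Real.rpow_pos_of_pos hσ2 _).ne'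
    field_simp
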